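/- Let E be a real inner product space, let f : E → E be a linear isometry, and let n ∈ E be a nonzero vector with f n = n. Then for all nonzero vectors v, e ∈ E, |angle(f v, e) − angle(v, e)| ≤ 2 · angle(n, e), where angle denotes the (undirected) angle between nonzero vectors, with values in [0, π]. (In particular, a Bloch-sphere rotation about the axis (1,0,±u)/√(1+u²) changes the angle between a state vector and the x-axis by at most 2·arctan u, and the angle to the z-axis by at most π − 2·arctan u.) -/

import Mathlib

open InnerProductGeometry

section Triangle

variable {V : Type*} [NormedAddCommGroup V] [InnerProductSpace ℝ V]

local notation "⟪" x ", " y "⟫" => @inner ℝ _ _ x y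

private lemma key_ineq (x y z : V) (hy : y ≠ 0) :
    ⟪x, y⟫ * ⟪y, z⟫ -
      Real.sqrt ((‖x‖ ^ 2 * ‖y‖ ^ 2 - ⟪x, y⟫ ^ 2) * (‖y‖ ^ 2 * ‖z‖ ^ 2 - ⟪y, z⟫ ^ 2)) ≤
    ⟪x, z⟫ * ‖y‖ ^ 2 := by
  set u : V := (‖y‖ ^ 2 : ℝ) • x - ⟪x, y⟫ • y with hu
  set w : V := (‖y‖ ^ 2 : ℝ) • z - ⟪y, z⟫ • y with hw
  have hyy : ⟪y, y⟫ = ‖y‖ ^ 2 := real_inner_self_eq_norm_sq y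
  have h1 : ⟪u, w⟫ = ‖y‖ ^ 2 * (⟪x, z⟫ * ‖y‖ ^ 2 - ⟪x, y⟫ * ⟪y, z⟫) := by
    simp only [hu, hw, inner_sub_left, inner_sub_right, real_inner_smul_left,
      real_inner_smul_right, hyy, real_inner_comm y x, real_inner_comm y z]
    ring
  have h2 : ‖u‖ ^ 2 = ‖y‖ ^ 2 * (‖x‖ ^ 2 * ‖y‖ ^ 2 - ⟪x, y⟫ ^ 2) := by
    rw [← real_inner_self_eq_norm_sq]
    simp only [hu, inner_sub_left, inner_sub_right, real_inner_smul_left,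
      real_inner_smul_right, hyy, real_inner_comm y x, real_inner_self_eq_norm_sq x]
    ring
  have h3 : ‖w‖ ^ 2 = ‖y‖ ^ 2 * (‖y‖ ^ 2 * ‖z‖ ^ 2 - ⟪y, z⟫ ^ 2) := by
    rw [← real_inner_self_eq_norm_sq]
    simp only [hw, inner_sub_left, inner_sub_right, real_inner_smul_left,
      real_inner_smul_right, hyy, real_inner_comm y z, real_inner_self_eq_norm_sq z]
    ring
  have hA : (0 : ℝ) ≤ ‖x‖ ^ 2 * ‖y‖ ^ 2 - ⟪x, y⟫ ^ 2 := by
    have := real_inner_mul_inner_self_le x y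
    rw [real_inner_self_eq_norm_sq, real_inner_self_eq_norm_sq] at this
    nlinarith
  have hB : (0 : ℝ) ≤ ‖y‖ ^ 2 * ‖z‖ ^ 2 - ⟪y, z⟫ ^ 2 := by
    have := real_inner_mul_inner_self_le y z
    rw [real_inner_self_eq_norm_sq, real_inner_self_eq_norm_sq] at this
    nlinarith
  have hcs : -(‖u‖ * ‖w‖) ≤ ⟪u, w⟫ := neg_le_of_abs_le (abs_real_inner_le_norm u w)
  have hyQ : (0 : ℝ) < ‖y‖ ^ 2 := pow_pos (norm_pos_iff.mpr hy) 2
  have huw : ‖u‖ * ‖w‖ =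
      ‖y‖ ^ 2 * Real.sqrt ((‖x‖ ^ 2 * ‖y‖ ^ 2 - ⟪x, y⟫ ^ 2) *
        (‖y‖ ^ 2 * ‖z‖ ^ 2 - ⟪y, z⟫ ^ 2)) := by
    have hun : ‖u‖ = Real.sqrt (‖y‖ ^ 2 * (‖x‖ ^ 2 * ‖y‖ ^ 2 - ⟪x, y⟫ ^ 2)) := by
      rw [← h2, Real.sqrt_sq (norm_nonneg u)]
    have hwn : ‖w‖ = Real.sqrt (‖y‖ ^ 2 * (‖y‖ ^ 2 * ‖z‖ ^ 2 - ⟪y, z⟫ ^ 2)) := by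
      rw [← h3, Real.sqrt_sq (norm_nonneg w)]
    rw [hun, hwn, ← Real.sqrt_mul (by positivity),
      show ‖y‖ ^ 2 * (‖x‖ ^ 2 * ‖y‖ ^ 2 - ⟪x, y⟫ ^ 2) *
          (‖y‖ ^ 2 * (‖y‖ ^ 2 * ‖z‖ ^ 2 - ⟪y, z⟫ ^ 2)) =
        (‖y‖ ^ 2) ^ 2 * ((‖x‖ ^ 2 * ‖y‖ ^ 2 - ⟪x, y⟫ ^ 2) *
          (‖y‖ ^ 2 * ‖z‖ ^ 2 - ⟪y, z⟫ ^ 2)) by ring,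
      Real.sqrt_mul (by positivity), Real.sqrt_sq hyQ.le]
  rw [h1, huw] at hcs
  nlinarith [hcs]

private lemma angle_triangle' (x y z : V) :
    InnerProductGeometry.angle x z ≤
      InnerProductGeometry.angle x y + InnerProductGeometry.angle y z := by
  by_cases hπ : Real.pi ≤ angle x y + angle y z
  · exact (angle_le_pi x z).trans hπ
  push_neg at hπ
  by_cases hx : x = 0
  · simp only [hx, angle_zero_left]
    linarith [angle_nonneg y z]
  by_cases hz : z = 0
  · simp only [hz, angle_zero_right]
    linarith [angle_nonneg x y]
  by_cases hy : y = 0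
  · exfalso
    simp only [hy, angle_zero_right, angle_zero_left] at hπ
    linarith
  -- all nonzero, angle x y + angle y z < π
  have hxn : (0 : ℝ) < ‖x‖ := norm_pos_iff.mpr hx
  have hyn : (0 : ℝ) < ‖y‖ := norm_pos_iff.mpr hy
  have hzn : (0 : ℝ) < ‖z‖ := norm_pos_iff.mpr hz
  have hca : Real.cos (angle x y) * (‖x‖ * ‖y‖) = ⟪x, y⟫ :=
    cos_angle_mul_norm_mul_norm x y
  have hcb : Real.cos (angle y z) * (‖y‖ * ‖z‖) = ⟪y, z⟫ :=
    cos_angle_mul_norm_mul_norm y z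
  have hsa : Real.sin (angle x y) * (‖x‖ * ‖y‖) =
      Real.sqrt (⟪x, x⟫ * ⟪y, y⟫ - ⟪x, y⟫ * ⟪x, y⟫) :=
    sin_angle_mul_norm_mul_norm x y
  have hsb : Real.sin (angle y z) * (‖y‖ * ‖z‖) =
      Real.sqrt (⟪y, y⟫ * ⟪z, z⟫ - ⟪y, z⟫ * ⟪y, z⟫) :=
    sin_angle_mul_norm_mul_norm y z
  rw [real_inner_self_eq_norm_sq, real_inner_self_eq_norm_sq] at hsa hsb
  have hA : (0 : ℝ) ≤ ‖x‖ ^ 2 * ‖y‖ ^ 2 - ⟪x, y⟫ ^ 2 := by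
    have := real_inner_mul_inner_self_le x y
    rw [real_inner_self_eq_norm_sq, real_inner_self_eq_norm_sq] at this
    nlinarith
  have hmul : Real.cos (angle x y + angle y z) * (‖x‖ * ‖y‖ * (‖y‖ * ‖z‖)) =
      ⟪x, y⟫ * ⟪y, z⟫ -
        Real.sqrt ((‖x‖ ^ 2 * ‖y‖ ^ 2 - ⟪x, y⟫ ^ 2) *
          (‖y‖ ^ 2 * ‖z‖ ^ 2 - ⟪y, z⟫ ^ 2)) := by
    rw [Real.cos_add]
    have : (Real.cos (angle x y) * Real.cos (angle y z) -
        Real.sin (angle x y) * Real.sin (angle y z)) * (‖x‖ * ‖y‖ * (‖y‖ * ‖z‖)) =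
        (Real.cos (angle x y) * (‖x‖ * ‖y‖)) * (Real.cos (angle y z) * (‖y‖ * ‖z‖)) -
        (Real.sin (angle x y) * (‖x‖ * ‖y‖)) * (Real.sin (angle y z) * (‖y‖ * ‖z‖)) := by
      ring
    rw [this, hca, hcb, hsa, hsb, ← Real.sqrt_mul (by nlinarith)]
    ring_nf
  have hkey := key_ineq x y z hy
  have hcz : Real.cos (angle x z) * (‖x‖ * ‖z‖) = ⟪x, z⟫ :=
    cos_angle_mul_norm_mul_norm x z
  have hcos : Real.cos (angle x y + angle y z) ≤ Real.cos (angle x z) := by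
    have hpos : (0 : ℝ) < ‖x‖ * ‖y‖ * (‖y‖ * ‖z‖) := by positivity
    rw [← mul_le_mul_iff_of_pos_right hpos, hmul]
    calc ⟪x, y⟫ * ⟪y, z⟫ -
          Real.sqrt ((‖x‖ ^ 2 * ‖y‖ ^ 2 - ⟪x, y⟫ ^ 2) *
            (‖y‖ ^ 2 * ‖z‖ ^ 2 - ⟪y, z⟫ ^ 2)) ≤ ⟪x, z⟫ * ‖y‖ ^ 2 := hkey
      _ = Real.cos (angle x z) * (‖x‖ * ‖y‖ * (‖y‖ * ‖z‖)) := by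
          rw [← hcz]; ring
  by_contra hcon
  push_neg at hcon
  have : Real.cos (angle x z) < Real.cos (angle x y + angle y z) :=
    Real.strictAntiOn_cos
      ⟨add_nonneg (angle_nonneg x y) (angle_nonneg y z), hπ.le⟩
      ⟨angle_nonneg x z, angle_le_pi x z⟩ hcon
  linarith

end Triangle

/-- A linear isometry fixing a nonzero vector `n` changes the (undirected) angle of any
nonzero vector to any nonzero reference direction `e` by at most `2·angle n e`
(the bound `Δθ^max` of Fig. 7, underlying Proposition 12). -/
theorem angle_change_bound {E : Type*} [NormedAddCommGroup E] [InnerProductSpace ℝ E]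
    (f : E →ₗᵢ[ℝ] E) (n : E) (hn : n ≠ 0) (hfn : f n = n) :
    ∀ v e : E, v ≠ 0 → e ≠ 0 →
      |InnerProductGeometry.angle (f v) e - InnerProductGeometry.angle v e| ≤
        2 * InnerProductGeometry.angle n e := by
  intro v e hv he
  have hvn : angle (f v) n = angle v n := by
    conv_lhs => rw [← hfn]
    exact f.angle_map v n
  have h1 : angle (f v) e ≤ angle v e + 2 * angle n e := by
    calc angle (f v) e ≤ angle (f v) n + angle n e := angle_triangle' _ _ _
      _ = angle v n + angle n e := by rw [hvn]
      _ ≤ (angle v e + angle e n) + angle n e := by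
          linarith [angle_triangle' v e n]
      _ = angle v e + 2 * angle n e := by rw [angle_comm e n]; ring
  have h2 : angle v e ≤ angle (f v) e + 2 * angle n e := by
    calc angle v e ≤ angle v n + angle n e := angle_triangle' _ _ _
      _ = angle (f v) n + angle n e := by rw [hvn]
      _ ≤ (angle (f v) e + angle e n) + angle n e := by
          linarith [angle_triangle' (f v) e n]
      _ = angle (f v) e + 2 * angle n e := by rw [angle_comm e n]; ring
  rw [abs_sub_le_iff]
  constructor <;> linarith
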